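/- Let p, q : ℝⁿ → [1,∞] be measurable with q⁻ := ess-inf q > 0 (in fact q⁻ ≥ 1), let 0 < a < 1, and (g_m)_{m∈ℕ₀} ∈ ℓ^{q(·)}(L^{p(·)}). Define G_j(x) = Σ_{m ≥ j} a^{m−j} g_m(x) and H_j(x) = Σ_{m ≤ j} a^{j−m} g_m(x). Then ‖(G_j)_j‖_{ℓ^{q(·)}(L^{p(·)})} + ‖(H_j)_j‖_{ℓ^{q(·)}(L^{p(·)})} ≲ ‖(g_m)_m‖_{ℓ^{q(·)}(L^{p(·)})}, with the implicit constant depending only on a and q⁻. -/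

import Mathlib

open MeasureTheory ENNReal Filter
open scoped SchwartzMap FourierTransform

noncomputable section

/-- Euclidean space ℝⁿ. -/
abbrev En (n : ℕ) := EuclideanSpace ℝ (Fin n)

/-- `ω_p(t)`: `t^p` for finite `p`; for `p = ∞` it is `0` if `t ≤ 1` and `∞` otherwise. -/
def omegaP (p t : ℝ≥0∞) : ℝ≥0∞ :=
  if p = ∞ then (if t ≤ 1 then 0 else ∞) else t ^ p.toReal

/-- Variable exponent modular `ρ_{p(·)}` on nonnegative (ℝ≥0∞-valued) functions. -/
def rhoP {n : ℕ} (p : En n → ℝ≥0∞) (F : En n → ℝ≥0∞) : ℝ≥0∞ :=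
  ∫⁻ x, omegaP (p x) (F x)

/-- Luxemburg norm for the variable exponent Lebesgue space. -/
def luxNorm {n : ℕ} (p : En n → ℝ≥0∞) (F : En n → ℝ≥0∞) : ℝ≥0∞ :=
  sInf {l : ℝ≥0∞ | 0 < l ∧ rhoP p (fun x => F x / l) ≤ 1}

/-- The nonnegative absolute value of a real function, as an ℝ≥0∞-valued function. -/
def nnAbs {n : ℕ} (f : En n → ℝ) : En n → ℝ≥0∞ := fun x => ENNReal.ofReal |f x|

/-- Modular of the mixed Lebesgue-sequence space `ℓ^{q(·)}(L^{p(·)})`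
(convention `λ^{1/∞} = λ^0 = 1`). -/
def mixedModular {n : ℕ} (q p : En n → ℝ≥0∞) (F : ℕ → En n → ℝ≥0∞) : ℝ≥0∞ :=
  ∑' j, sInf {l : ℝ≥0∞ | 0 < l ∧ rhoP p (fun x => F j x / l ^ ((q x)⁻¹).toReal) ≤ 1}

/-- Quasi-norm of the mixed Lebesgue-sequence space `ℓ^{q(·)}(L^{p(·)})`. -/
def mixedNorm {n : ℕ} (q p : En n → ℝ≥0∞) (F : ℕ → En n → ℝ≥0∞) : ℝ≥0∞ :=
  sInf {m : ℝ≥0∞ | 0 < m ∧ mixedModular q p (fun j x => F j x / m) ≤ 1}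

/-- `g` is locally log-Hölder continuous with constant `c`. -/
def LocLogHolder {n : ℕ} (c : ℝ) (g : En n → ℝ) : Prop :=
  0 < c ∧ ∀ x y : En n, |g x - g y| ≤ c / Real.log (Real.exp 1 + 1 / ‖x - y‖)

/-- `g ∈ C^log_loc(ℝⁿ)`. -/
def ClogLoc {n : ℕ} (g : En n → ℝ) : Prop := ∃ c, LocLogHolder c g

/-- `g` is globally log-Hölder continuous: locally log-Hölder plus the log-Hölder
decay condition at infinity. -/
def GlobLogHolder {n : ℕ} (g : En n → ℝ) : Prop :=
  ClogLoc g ∧ ∃ c g_inf : ℝ, 0 < c ∧ ∀ x : En n, |g x - g_inf| ≤ c / Real.log (Real.exp 1 + ‖x‖)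

/-- A measurable variable exponent `p : ℝⁿ → [1,∞]`. -/
def IsExponent {n : ℕ} (p : En n → ℝ≥0∞) : Prop := Measurable p ∧ ∀ x, 1 ≤ p x

/-- `p ∈ 𝒫^log(ℝⁿ)`: a variable exponent with `1/p` globally log-Hölder continuous. -/
def Plog {n : ℕ} (p : En n → ℝ≥0∞) : Prop :=
  IsExponent p ∧ GlobLogHolder (fun x => ((p x)⁻¹).toReal)

/-- Convolution of two real functions. -/
def conv {n : ℕ} (φ f : En n → ℝ) (x : En n) : ℝ := ∫ y, φ (x - y) * f y

/-- Partial derivative in the `k`-th coordinate direction. -/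
def pderiv {n : ℕ} (k : Fin n) (f : En n → ℝ) (x : En n) : ℝ :=
  fderiv ℝ f x (EuclideanSpace.single k 1)

/-- Besov quasi-norm with variable smoothness and integrability, relative to a
system `(φ_j)_j`. -/
def besovNorm {n : ℕ} (φ : ℕ → En n → ℝ) (s : En n → ℝ) (q p : En n → ℝ≥0∞)
    (g : En n → ℝ) : ℝ≥0∞ :=
  mixedNorm q p (fun j x => ENNReal.ofReal ((2:ℝ) ^ ((j:ℝ) * s x) * |conv (φ j) g x|))

/-- A smooth dyadic resolution of unity `(ℱφ_j)_j`. -/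
structure DyadicResolution (n : ℕ) where
  φ : ℕ → 𝓢(En n, ℝ)
  supp_zero : ∀ ξ : En n, 2 < ‖ξ‖ → 𝓕 (fun y => (φ 0 y : ℂ)) ξ = 0
  supp_pos : ∀ j : ℕ, 0 < j → ∀ ξ : En n,
      (‖ξ‖ < (2:ℝ) ^ ((j:ℤ) - 1) ∨ (2:ℝ) ^ ((j:ℤ) + 1) < ‖ξ‖) →
      𝓕 (fun y => (φ j y : ℂ)) ξ = 0
  sum_one : ∀ ξ : En n, ∑' j, 𝓕 (fun y => (φ j y : ℂ)) ξ = 1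

/-- The commutator `[V·∇, Δ_j]f` relative to a convolution kernel `φj`. -/
def commVf {n : ℕ} (φj : En n → ℝ) (V : Fin n → En n → ℝ) (f : En n → ℝ)
    (x : En n) : ℝ :=
  ∑ k, (V k x * pderiv k (conv φj f) x - conv φj (fun y => V k y * pderiv k f y) x)

end

section Stmt11Aux

open scoped ENNReal

variable {n : ℕ}

/-- The defining set of the inner Luxemburg-type quantity in the mixed modular. -/
def nuSet (p q : En n → ℝ≥0∞) (F : En n → ℝ≥0∞) : Set ℝ≥0∞ :=
  {l : ℝ≥0∞ | 0 < l ∧ rhoP p (fun x => F x / l ^ ((q x)⁻¹).toReal) ≤ 1}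

lemma mixedModular_eq (q p : En n → ℝ≥0∞) (F : ℕ → En n → ℝ≥0∞) :
    mixedModular q p F = ∑' j, sInf (nuSet p q (F j)) := rfl

lemma mixedNorm_eq (q p : En n → ℝ≥0∞) (F : ℕ → En n → ℝ≥0∞) :
    mixedNorm q p F
      = sInf {m : ℝ≥0∞ | 0 < m ∧ mixedModular q p (fun j x => F j x / m) ≤ 1} := rfl

lemma rhoP_eq (p : En n → ℝ≥0∞) (F : En n → ℝ≥0∞) :
    rhoP p F = ∫⁻ x, omegaP (p x) (F x) := rfl

lemma omegaP_mono (P : ℝ≥0∞) {s t : ℝ≥0∞} (h : s ≤ t) : omegaP P s ≤ omegaP P t := by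
  rcases eq_or_ne P ∞ with h1 | h1
  · simp only [omegaP, if_pos h1]
    by_cases h2 : t ≤ 1
    · rw [if_pos (h.trans h2), if_pos h2]
    · rw [if_neg h2]
      exact le_top
  · simp only [omegaP, if_neg h1]
    exact ENNReal.rpow_le_rpow h ENNReal.toReal_nonneg

lemma omegaP_zero {P : ℝ≥0∞} (hP : 1 ≤ P) : omegaP P 0 = 0 := by
  unfold omegaP
  split_ifs with h1 h2
  · rfl
  · exact absurd zero_le_one h2
  · refine ENNReal.zero_rpow_of_pos ?_
    have h3 : (1 : ℝ) ≤ P.toReal := by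
      have := ENNReal.toReal_mono h1 hP
      simpa using this
    linarith

lemma rhoP_mono {p : En n → ℝ≥0∞} {F G : En n → ℝ≥0∞} (h : ∀ x, F x ≤ G x) :
    rhoP p F ≤ rhoP p G :=
  MeasureTheory.lintegral_mono fun x => omegaP_mono _ (h x)

lemma rhoP_zero (p : En n → ℝ≥0∞) (hp1 : ∀ x, 1 ≤ p x) :
    rhoP p (fun _ => 0) = 0 := by
  rw [rhoP_eq]
  simp [omegaP_zero (hp1 _)]

lemma measurable_omegaP {p : En n → ℝ≥0∞} (hp : Measurable p) {F : En n → ℝ≥0∞}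
    (hF : Measurable F) : Measurable fun x => omegaP (p x) (F x) := by
  unfold omegaP
  refine Measurable.ite (hp (measurableSet_singleton ∞)) ?_ ?_
  · exact Measurable.ite (measurableSet_le hF measurable_const) measurable_const
      measurable_const
  · exact hF.pow hp.ennreal_toReal

lemma finJensen (s : Finset ℕ) (w z : ℕ → ℝ≥0∞) (hw : ∑ i ∈ s, w i ≤ 1) {r : ℝ}
    (hr : 1 ≤ r) : (∑ i ∈ s, w i * z i) ^ r ≤ ∑ i ∈ s, w i * z i ^ r := by
  classical
  set W := ∑ i ∈ s, w i with hW
  set w' : Option ℕ → ℝ≥0∞ := fun o => o.elim (1 - W) w with hw'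
  set z' : Option ℕ → ℝ≥0∞ := fun o => o.elim 0 z with hz'
  set s' : Finset (Option ℕ) :=
    insert none (s.map ⟨some, Option.some_injective ℕ⟩) with hs'
  have hmem : (none : Option ℕ) ∉ s.map ⟨some, Option.some_injective ℕ⟩ := by simp
  have hsum1 : ∑ o ∈ s', w' o = 1 := by
    rw [hs', Finset.sum_insert hmem, Finset.sum_map]
    simp only [hw', Function.Embedding.coeFn_mk, Option.elim]
    exact tsub_add_cancel_of_le hw
  have h := ENNReal.rpow_arith_mean_le_arith_mean_rpow s' w' z' hsum1 hr
  rw [hs', Finset.sum_insert hmem, Finset.sum_insert hmem, Finset.sum_map,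
    Finset.sum_map] at h
  have hr0 : (0:ℝ) < r := lt_of_lt_of_le zero_lt_one hr
  simpa [hw', hz', ENNReal.zero_rpow_of_pos hr0] using h

lemma tsumJensen (w z : ℕ → ℝ≥0∞) (hw : ∑' i, w i ≤ 1) {r : ℝ} (hr : 1 ≤ r) :
    (∑' i, w i * z i) ^ r ≤ ∑' i, w i * z i ^ r := by
  have hr0 : (0:ℝ) < r := lt_of_lt_of_le zero_lt_one hr
  rw [← ENNReal.le_rpow_inv_iff hr0, ENNReal.tsum_eq_iSup_sum]
  refine iSup_le fun s => ?_
  rw [ENNReal.le_rpow_inv_iff hr0]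
  calc (∑ i ∈ s, w i * z i) ^ r
      ≤ ∑ i ∈ s, w i * z i ^ r :=
        finJensen s w z (le_trans (ENNReal.sum_le_tsum s) hw) hr
    _ ≤ ∑' i, w i * z i ^ r := ENNReal.sum_le_tsum s

lemma omegaP_jensen {P : ℝ≥0∞} (hP : 1 ≤ P) (w z : ℕ → ℝ≥0∞) (hw0 : ∀ i, w i ≠ 0)
    (hw : ∑' i, w i ≤ 1) :
    omegaP P (∑' i, w i * z i) ≤ ∑' i, w i * omegaP P (z i) := by
  rcases eq_or_ne P ∞ with h1 | h1
  · subst h1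
    simp only [omegaP, if_pos rfl]
    by_cases hz : ∀ i, z i ≤ 1
    · have hle : (∑' i, w i * z i) ≤ 1 := by
        refine le_trans (Summable.tsum_le_tsum (f := fun i => w i * z i) (g := w)
          (fun i => ?_) ENNReal.summable ENNReal.summable) hw
        exact (mul_le_mul_right (hz i) (w i)).trans_eq (mul_one _)
      rw [if_pos hle]
      exact zero_le
    · push_neg at hz
      obtain ⟨i0, hi0⟩ := hz
      have hterm : w i0 * (if z i0 ≤ 1 then (0:ℝ≥0∞) else ∞) = ∞ := by
        rw [if_neg (not_le.mpr hi0), ENNReal.mul_top (hw0 i0)]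
      have h2 := ENNReal.le_tsum (f := fun i => w i * if z i ≤ 1 then (0:ℝ≥0∞) else ∞) i0
      rw [hterm] at h2
      exact le_trans le_top h2
  · have hr : (1:ℝ) ≤ P.toReal := by
      have := ENNReal.toReal_mono h1 hP
      simpa using this
    simp only [omegaP, if_neg h1]
    exact tsumJensen w z hw hr

lemma mem_nuSet_of_lt {p q : En n → ℝ≥0∞} {F : En n → ℝ≥0∞} {l : ℝ≥0∞}
    (h : sInf (nuSet p q F) < l) : l ∈ nuSet p q F := by
  obtain ⟨l0, hl0, hl0l⟩ := sInf_lt_iff.mp h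
  refine ⟨lt_trans hl0.1 hl0l, le_trans (rhoP_mono fun x => ?_) hl0.2⟩
  exact ENNReal.div_le_div_left
    (ENNReal.rpow_le_rpow hl0l.le ENNReal.toReal_nonneg) _

lemma key_rho (p q : En n → ℝ≥0∞) (hp : IsExponent p) (hq : IsExponent q)
    {d : ℝ≥0∞} (hd0 : d ≠ 0) (hd1 : d < 1)
    (u : ℕ → En n → ℝ≥0∞) (hu : ∀ i, Measurable (u i))
    (μ : ℕ → ℝ≥0∞) (hμ0 : ∀ i, μ i ≠ 0) (hμt : ∀ i, μ i ≠ ∞)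
    (hμρ : ∀ i, rhoP p (fun x => u i x / (μ i) ^ ((q x)⁻¹).toReal) ≤ 1)
    {Λ : ℝ≥0∞}
    (hΛ : ∀ i, (1 - d) * (d ^ i * μ i) ≤ Λ)
    {F : En n → ℝ≥0∞}
    (hF : ∀ x, F x ≤ (1 - d) ^ 2 * ∑' i, (d ^ 2) ^ i * u i x) :
    rhoP p (fun x => F x / Λ ^ ((q x)⁻¹).toReal) ≤ 1 := by
  have h1d0 : (1 : ℝ≥0∞) - d ≠ 0 := by
    simpa [tsub_eq_zero_iff_le] using hd1.not_ge
  have h1dt : (1 : ℝ≥0∞) - d ≠ ∞ := ne_top_of_le_ne_top ENNReal.one_ne_top tsub_le_self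
  have he0 : ∀ x : En n, (0:ℝ) ≤ ((q x)⁻¹).toReal := fun x => ENNReal.toReal_nonneg
  have he1 : ∀ x : En n, ((q x)⁻¹).toReal ≤ 1 := by
    intro x
    have h : (q x)⁻¹ ≤ 1 := ENNReal.inv_le_one.mpr (hq.2 x)
    simpa using ENNReal.toReal_mono ENNReal.one_ne_top h
  set w : ℕ → ℝ≥0∞ := fun i => (1 - d) * d ^ i with hwdef
  have hw0 : ∀ i, w i ≠ 0 := fun i => mul_ne_zero h1d0 (pow_ne_zero i hd0)
  have hwle : ∀ i, w i ≤ 1 := fun i =>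
    mul_le_one' tsub_le_self (pow_le_one' hd1.le i)
  have hwt : ∀ i, w i ≠ ∞ := fun i => ne_top_of_le_ne_top ENNReal.one_ne_top (hwle i)
  have hwsum : ∑' i, w i ≤ 1 := by
    rw [hwdef]
    simp only
    rw [ENNReal.tsum_mul_left, ENNReal.tsum_geometric]
    exact le_of_eq (ENNReal.mul_inv_cancel h1d0 h1dt)
  have hpoint : ∀ x, F x / Λ ^ ((q x)⁻¹).toReal
      ≤ ∑' i, w i * (u i x / (μ i) ^ ((q x)⁻¹).toReal) := by
    intro x
    refine ENNReal.div_le_of_le_mul ?_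
    rw [← ENNReal.tsum_mul_right]
    refine le_trans (hF x) ?_
    rw [← ENNReal.tsum_mul_left]
    refine Summable.tsum_le_tsum (fun i => ?_) ENNReal.summable ENNReal.summable
    have hμepos : (0:ℝ≥0∞) < (μ i) ^ ((q x)⁻¹).toReal :=
      ENNReal.rpow_pos (pos_iff_ne_zero.mpr (hμ0 i)) (hμt i)
    have hμet : (μ i) ^ ((q x)⁻¹).toReal ≠ ∞ :=
      (ENNReal.rpow_lt_top_of_nonneg (he0 x) (hμt i)).ne
    have hcancel : u i x / (μ i) ^ ((q x)⁻¹).toReal * (μ i) ^ ((q x)⁻¹).toReal = u i x :=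
      ENNReal.div_mul_cancel hμepos.ne' hμet
    have hA1 : (1 - d) * d ^ i ≤ 1 :=
      mul_le_one' tsub_le_self (pow_le_one' hd1.le i)
    have hΛe : ((1 - d) * d ^ i) * (μ i) ^ ((q x)⁻¹).toReal ≤ Λ ^ ((q x)⁻¹).toReal := by
      calc ((1 - d) * d ^ i) * (μ i) ^ ((q x)⁻¹).toReal
          ≤ ((1 - d) * d ^ i) ^ ((q x)⁻¹).toReal * (μ i) ^ ((q x)⁻¹).toReal := by
            refine mul_le_mul_left ?_ _
            have := ENNReal.rpow_le_rpow_of_exponent_ge hA1 (he1 x)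
            simpa using this
        _ = (((1 - d) * d ^ i) * μ i) ^ ((q x)⁻¹).toReal :=
            (ENNReal.mul_rpow_of_nonneg _ _ (he0 x)).symm
        _ ≤ Λ ^ ((q x)⁻¹).toReal := by
            refine ENNReal.rpow_le_rpow ?_ (he0 x)
            rw [mul_assoc]
            exact hΛ i
    calc (1 - d) ^ 2 * ((d ^ 2) ^ i * u i x)
        = w i * (u i x / (μ i) ^ ((q x)⁻¹).toReal)
            * (((1 - d) * d ^ i) * (μ i) ^ ((q x)⁻¹).toReal) := by
          rw [hwdef]
          simp only
          rw [show w i * (u i x / (μ i) ^ ((q x)⁻¹).toReal)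
              * (((1 - d) * d ^ i) * (μ i) ^ ((q x)⁻¹).toReal)
            = ((1 - d) * d ^ i) * ((1 - d) * d ^ i)
              * (u i x / (μ i) ^ ((q x)⁻¹).toReal * (μ i) ^ ((q x)⁻¹).toReal) from by
              rw [hwdef]; ring, hcancel]
          ring
      _ ≤ w i * (u i x / (μ i) ^ ((q x)⁻¹).toReal) * Λ ^ ((q x)⁻¹).toReal :=
          mul_le_mul_right hΛe _
  have hmeas : ∀ i, Measurable fun x => u i x / (μ i) ^ ((q x)⁻¹).toReal := by
    intro i
    exact (hu i).div (measurable_const.pow (hq.1.inv.ennreal_toReal))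
  calc rhoP p (fun x => F x / Λ ^ ((q x)⁻¹).toReal)
      ≤ rhoP p (fun x => ∑' i, w i * (u i x / (μ i) ^ ((q x)⁻¹).toReal)) :=
        rhoP_mono hpoint
    _ ≤ ∫⁻ x, ∑' i, w i * omegaP (p x) (u i x / (μ i) ^ ((q x)⁻¹).toReal) := by
        rw [rhoP_eq]
        exact MeasureTheory.lintegral_mono fun x =>
          omegaP_jensen (hp.2 x) w _ hw0 hwsum
    _ = ∑' i, ∫⁻ x, w i * omegaP (p x) (u i x / (μ i) ^ ((q x)⁻¹).toReal) :=
        MeasureTheory.lintegral_tsum fun i =>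
          ((measurable_omegaP hp.1 (hmeas i)).const_mul (w i)).aemeasurable
    _ ≤ ∑' i, w i * 1 := by
        refine Summable.tsum_le_tsum (fun i => ?_) ENNReal.summable ENNReal.summable
        rw [MeasureTheory.lintegral_const_mul' _ _ (hwt i)]
        exact mul_le_mul_right (hμρ i) _
    _ ≤ 1 := by simpa using hwsum

lemma modular_bound (p q : En n → ℝ≥0∞) (hp : IsExponent p) (hq : IsExponent q)
    {d : ℝ≥0∞} (hd0 : d ≠ 0) (hd1 : d < 1)
    (h : ℕ → En n → ℝ≥0∞) (hh : ∀ m, Measurable (h m))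
    (hmod : mixedModular q p h ≤ 1)
    (σ : ℕ → ℕ → Option ℕ)
    (G : ℕ → En n → ℝ≥0∞)
    (hG : ∀ j x, G j x ≤ (1 - d) ^ 2 * ∑' i, (d ^ 2) ^ i * (σ j i).elim 0 (fun m => h m x))
    (hσ : ∀ (v : ℕ → ℝ≥0∞) i, ∑' j, (σ j i).elim 0 v ≤ ∑' m, v m) :
    mixedModular q p G ≤ 1 := by
  have h1d0 : (1 : ℝ≥0∞) - d ≠ 0 := by
    simpa [tsub_eq_zero_iff_le] using hd1.not_ge
  have h1dt : (1 : ℝ≥0∞) - d ≠ ∞ := ne_top_of_le_ne_top ENNReal.one_ne_top tsub_le_self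
  set lam : ℕ → ℝ≥0∞ := fun m => sInf (nuSet p q (h m)) with hlamdef
  have hlam_sum : ∑' m, lam m ≤ 1 := by
    rw [mixedModular_eq] at hmod
    exact hmod
  have hlam_le : ∀ m, lam m ≤ 1 := fun m => le_trans (ENNReal.le_tsum m) hlam_sum
  have hmain : ∀ ε : ℝ≥0∞, ε ≠ 0 → ε ≤ 1 → mixedModular q p G ≤ 1 + 4 * ε := by
    intro ε hε0 hε1
    set μ : ℕ → ℕ → ℝ≥0∞ :=
      fun j i => (σ j i).elim 0 lam + ε * 2⁻¹ ^ (j + i) with hμdef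
    have hμ0 : ∀ j i, μ j i ≠ 0 := by
      intro j i
      simp only [hμdef]
      refine fun hcontra => hε0 ?_
      have := (add_eq_zero.mp hcontra).2
      rcases mul_eq_zero.mp this with h' | h'
      · exact h'
      · exact absurd h' (pow_ne_zero _ (by simp))
    have hμt : ∀ j i, μ j i ≠ ∞ := by
      intro j i
      simp only [hμdef]
      refine ENNReal.add_ne_top.mpr ⟨?_, ?_⟩
      · cases hsji : σ j i with
        | none => simp
        | some m =>
          simp only [Option.elim]
          exact ne_top_of_le_ne_top ENNReal.one_ne_top (hlam_le m)
      · exact ENNReal.mul_ne_top (ne_top_of_le_ne_top ENNReal.one_ne_top hε1)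
          (ne_top_of_le_ne_top ENNReal.one_ne_top
            (pow_le_one' (by simp [ENNReal.inv_le_one]) _))
    have hμρ : ∀ j i,
        rhoP p (fun x => (σ j i).elim 0 (fun m => h m x) / (μ j i) ^ ((q x)⁻¹).toReal)
          ≤ 1 := by
      intro j i
      cases hsji : σ j i with
      | none =>
        simp only [Option.elim]
        calc rhoP p (fun x => (0:ℝ≥0∞) / (μ j i) ^ ((q x)⁻¹).toReal)
            ≤ rhoP p (fun _ => 0) := rhoP_mono fun x => by simp
          _ ≤ 1 := by rw [rhoP_zero p hp.2]; exact zero_le_one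
      | some m =>
        simp only [Option.elim]
        have hlt : sInf (nuSet p q (h m)) < μ j i := by
          rw [hμdef]
          simp only [hsji, Option.elim]
          refine ENNReal.lt_add_right (ne_top_of_le_ne_top ENNReal.one_ne_top (hlam_le m)) ?_
          exact mul_ne_zero hε0 (pow_ne_zero _ (by simp))
        have := (mem_nuSet_of_lt hlt).2
        rw [hμdef] at this ⊢
        simp only [hsji, Option.elim] at this ⊢
        exact this
    set Λ : ℕ → ℝ≥0∞ := fun j => (1 - d) * ∑' i, d ^ i * μ j i with hΛdef
    have hΛub : ∀ j, Λ j ≤ (1 - d) * (2 * (1 - d)⁻¹) := by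
      intro j
      refine mul_le_mul_right ?_ _
      calc ∑' i, d ^ i * μ j i ≤ ∑' i, d ^ i * 2 := by
            refine Summable.tsum_le_tsum (fun i => mul_le_mul_right ?_ _) ENNReal.summable
              ENNReal.summable
            calc μ j i ≤ 1 + 1 := by
                  rw [hμdef]
                  refine add_le_add ?_ ?_
                  · cases hsji : σ j i with
                    | none => simp
                    | some m => exact hlam_le m
                  · exact le_trans (mul_le_mul_right (pow_le_one'
                      (by simp [ENNReal.inv_le_one]) _) ε)
                      (by simpa using hε1)
              _ = 2 := by norm_num
        _ = 2 * (1 - d)⁻¹ := by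
            rw [ENNReal.tsum_mul_right, ENNReal.tsum_geometric, mul_comm]
    have hΛt : ∀ j, Λ j ≠ ∞ := by
      intro j
      refine ne_top_of_le_ne_top ?_ (hΛub j)
      exact ENNReal.mul_ne_top h1dt
        (ENNReal.mul_ne_top (by norm_num) (ENNReal.inv_ne_top.mpr h1d0))
    have hΛ0 : ∀ j, Λ j ≠ 0 := by
      intro j
      rw [hΛdef]
      simp only
      refine mul_ne_zero h1d0 ?_
      refine fun hcontra => hμ0 j 0 ?_
      have h0 : d ^ 0 * μ j 0 = 0 := by
        have := ENNReal.le_tsum (f := fun i => d ^ i * μ j i) 0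
        rw [hcontra] at this
        exact le_antisymm this zero_le
      simpa using h0
    have hΛmem : ∀ j, Λ j ∈ nuSet p q (G j) := by
      intro j
      refine ⟨pos_iff_ne_zero.mpr (hΛ0 j), ?_⟩
      refine key_rho p q hp hq hd0 hd1
        (fun i x => (σ j i).elim 0 (fun m => h m x)) ?_ (μ j) (hμ0 j) (hμt j)
        (hμρ j) ?_ (hG j)
      · intro i
        cases hsji : σ j i with
        | none => simpa [hsji] using measurable_const
        | some m => simpa [hsji] using hh m
      · intro i
        rw [hΛdef]
        exact mul_le_mul_right (ENNReal.le_tsum i) _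
    have hsum : ∑' j, sInf (nuSet p q (G j)) ≤ ∑' j, Λ j := by
      refine Summable.tsum_le_tsum (fun j => sInf_le (hΛmem j)) ENNReal.summable ENNReal.summable
    rw [mixedModular_eq]
    refine le_trans hsum ?_
    have hsplit : ∑' j, Λ j
        = (1 - d) * ((∑' j, ∑' i, d ^ i * (σ j i).elim 0 lam)
            + ∑' j, ∑' i, d ^ i * (ε * 2⁻¹ ^ (j + i))) := by
      rw [hΛdef]
      simp only
      rw [ENNReal.tsum_mul_left, ← ENNReal.tsum_add]
      congr 1
      congr 1
      funext j
      rw [← ENNReal.tsum_add]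
      congr 1
      funext i
      rw [hμdef, mul_add]
    rw [hsplit, mul_add]
    have hS1 : (1 - d) * (∑' j, ∑' i, d ^ i * (σ j i).elim 0 lam) ≤ 1 := by
      have : (∑' j, ∑' i, d ^ i * (σ j i).elim 0 lam) ≤ (1 - d)⁻¹ := by
        rw [ENNReal.tsum_comm]
        calc ∑' i, ∑' j, d ^ i * (σ j i).elim 0 lam
            = ∑' i, d ^ i * ∑' j, (σ j i).elim 0 lam := by
              congr 1; funext i; rw [ENNReal.tsum_mul_left]
          _ ≤ ∑' i, d ^ i * 1 := by
              refine Summable.tsum_le_tsum (fun i => mul_le_mul_right ?_ _) ENNReal.summable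
                ENNReal.summable
              exact le_trans (hσ lam i) hlam_sum
          _ ≤ (1 - d)⁻¹ := by
              simp only [mul_one]
              rw [ENNReal.tsum_geometric]
      calc (1 - d) * (∑' j, ∑' i, d ^ i * (σ j i).elim 0 lam)
          ≤ (1 - d) * (1 - d)⁻¹ := mul_le_mul_right this _
        _ = 1 := ENNReal.mul_inv_cancel h1d0 h1dt
    have hS2 : (1 - d) * (∑' j, ∑' i, d ^ i * (ε * 2⁻¹ ^ (j + i))) ≤ 4 * ε := by
      have hin : ∀ j, (∑' i, d ^ i * (ε * 2⁻¹ ^ (j + i))) ≤ ε * 2⁻¹ ^ j * 2 := by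
        intro j
        calc ∑' i, d ^ i * (ε * 2⁻¹ ^ (j + i))
            ≤ ∑' i, 2⁻¹ ^ i * (ε * 2⁻¹ ^ j) := by
              refine Summable.tsum_le_tsum (fun i => ?_) ENNReal.summable ENNReal.summable
              rw [pow_add]
              calc d ^ i * (ε * (2⁻¹ ^ j * 2⁻¹ ^ i))
                  = (d ^ i * 2⁻¹ ^ i) * (ε * 2⁻¹ ^ j) := by ring
                _ ≤ (1 * 2⁻¹ ^ i) * (ε * 2⁻¹ ^ j) := by
                    refine mul_le_mul_left (mul_le_mul_left ?_ _) _
                    exact pow_le_one' hd1.le i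
                _ = 2⁻¹ ^ i * (ε * 2⁻¹ ^ j) := by rw [one_mul]
          _ = (∑' i : ℕ, (2:ℝ≥0∞)⁻¹ ^ i) * (ε * 2⁻¹ ^ j) := ENNReal.tsum_mul_right
          _ = ε * 2⁻¹ ^ j * 2 := by
              rw [ENNReal.tsum_geometric]
              rw [show (1:ℝ≥0∞) - 2⁻¹ = 2⁻¹ by
                rw [ENNReal.one_sub_inv_two]]
              rw [inv_inv, mul_comm]
      calc (1 - d) * (∑' j, ∑' i, d ^ i * (ε * 2⁻¹ ^ (j + i)))
          ≤ 1 * ∑' j, ε * 2⁻¹ ^ j * 2 := by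
            refine mul_le_mul' tsub_le_self ?_
            exact Summable.tsum_le_tsum hin ENNReal.summable ENNReal.summable
        _ = ε * ((∑' j : ℕ, (2:ℝ≥0∞)⁻¹ ^ j) * 2) := by
            rw [one_mul]
            rw [show (fun j => ε * 2⁻¹ ^ j * 2) = fun j => (2:ℝ≥0∞)⁻¹ ^ j * (ε * 2) from by
              funext j; ring]
            rw [ENNReal.tsum_mul_right]
            ring
        _ = 4 * ε := by
            rw [ENNReal.tsum_geometric]
            rw [show (1:ℝ≥0∞) - 2⁻¹ = 2⁻¹ by rw [ENNReal.one_sub_inv_two]]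
            rw [inv_inv]
            rw [show (2:ℝ≥0∞) * 2 = 4 by norm_num]
            ring
    exact add_le_add hS1 hS2
  refine ENNReal.le_of_forall_pos_le_add fun δ hδ _ => ?_
  have hδ0 : ((δ:ℝ≥0∞) / 4) ≠ 0 := by
    simp only [ne_eq, ENNReal.div_eq_zero_iff]
    push_neg
    constructor
    · exact_mod_cast hδ.ne'
    · norm_num
  set ε : ℝ≥0∞ := min 1 ((δ:ℝ≥0∞) / 4) with hεdef
  have hε0 : ε ≠ 0 := by
    rw [hεdef]
    simp only [ne_eq, min_eq_iff]
    intro hcontra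
    rcases hcontra with ⟨h1, _⟩ | ⟨h2, _⟩
    · exact one_ne_zero h1
    · exact hδ0 h2
  have hε1 : ε ≤ 1 := min_le_left _ _
  refine le_trans (hmain ε hε0 hε1) ?_
  refine add_le_add le_rfl ?_
  calc (4:ℝ≥0∞) * ε ≤ 4 * ((δ:ℝ≥0∞) / 4) := mul_le_mul_right (min_le_right _ _) _
    _ ≤ δ := ENNReal.mul_div_le

lemma norm_bound (p q : En n → ℝ≥0∞) (hp : IsExponent p) (hq : IsExponent q)
    {d : ℝ≥0∞} (hd0 : d ≠ 0) (hd1 : d < 1)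
    (g : ℕ → En n → ℝ≥0∞) (hg : ∀ m, Measurable (g m))
    (σ : ℕ → ℕ → Option ℕ)
    (G : ℕ → En n → ℝ≥0∞)
    (hσ : ∀ (v : ℕ → ℝ≥0∞) i, ∑' j, (σ j i).elim 0 v ≤ ∑' m, v m)
    (hG : ∀ M : ℝ≥0∞, M ≠ 0 → M ≠ ∞ → ∀ j x,
      G j x / (((1 - d)⁻¹) ^ 2 * M)
        ≤ (1 - d) ^ 2 * ∑' i, (d ^ 2) ^ i * (σ j i).elim 0 (fun m => g m x / M)) :
    mixedNorm q p G ≤ ((1 - d)⁻¹) ^ 2 * mixedNorm q p g := by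
  have h1d0 : (1 : ℝ≥0∞) - d ≠ 0 := by
    simpa [tsub_eq_zero_iff_le] using hd1.not_ge
  set c : ℝ≥0∞ := ((1 - d)⁻¹) ^ 2 with hcdef
  have hc0 : c ≠ 0 := by
    rw [hcdef]
    exact pow_ne_zero _ (by simp)
  have hct : c ≠ ∞ := by
    rw [hcdef]
    exact ENNReal.pow_ne_top (ENNReal.inv_ne_top.mpr h1d0)
  have hmem : ∀ M : ℝ≥0∞, 0 < M → mixedModular q p (fun j x => g j x / M) ≤ 1 →
      mixedNorm q p G ≤ c * M := by
    intro M hM0 hMmod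
    rcases eq_or_ne M ∞ with hMt | hMt
    · rw [hMt, ENNReal.mul_top hc0]
      exact le_top
    have hmod : mixedModular q p (fun j x => G j x / (c * M)) ≤ 1 := by
      refine modular_bound p q hp hq hd0 hd1 (fun m x => g m x / M)
        (fun m => (hg m).div measurable_const) hMmod σ _ ?_ hσ
      intro j x
      exact hG M hM0.ne' hMt j x
    rw [mixedNorm_eq]
    refine sInf_le ⟨?_, hmod⟩
    exact ENNReal.mul_pos hc0 hM0.ne'
  -- now conclude
  rw [mixedNorm_eq q p g]
  set S : Set ℝ≥0∞ :=
    {m : ℝ≥0∞ | 0 < m ∧ mixedModular q p (fun j x => g j x / m) ≤ 1} with hSdef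
  rcases eq_or_ne (sInf S) ∞ with hI | hI
  · rw [hI, ENNReal.mul_top hc0]
    exact le_top
  refine ENNReal.le_of_forall_pos_le_add fun δ hδ hfin => ?_
  have hδc0 : ((δ:ℝ≥0∞) / c) ≠ 0 := by
    simp only [ne_eq, ENNReal.div_eq_zero_iff]
    push_neg
    exact ⟨by exact_mod_cast hδ.ne', hct⟩
  have hlt : sInf S < sInf S + (δ:ℝ≥0∞) / c := ENNReal.lt_add_right hI hδc0
  obtain ⟨M, hM, hMlt⟩ := sInf_lt_iff.mp hlt
  calc mixedNorm q p G ≤ c * M := hmem M hM.1 hM.2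
    _ ≤ c * (sInf S + (δ:ℝ≥0∞) / c) := mul_le_mul_right hMlt.le _
    _ = c * sInf S + c * ((δ:ℝ≥0∞) / c) := mul_add _ _ _
    _ ≤ c * sInf S + δ := add_le_add le_rfl ENNReal.mul_div_le

lemma term_core {d M : ℝ≥0∞} (hd1 : d < 1) (hM0 : M ≠ 0) (hMt : M ≠ ∞)
    {b : ℝ≥0∞} (hbd : b ≤ d ^ 2) (i : ℕ) (y : ℝ≥0∞) :
    b ^ i * y ≤ (1 - d) ^ 2 * ((d ^ 2) ^ i * (y / M)) * (((1 - d)⁻¹) ^ 2 * M) := by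
  have h1d0 : (1 : ℝ≥0∞) - d ≠ 0 := by
    simpa [tsub_eq_zero_iff_le] using hd1.not_ge
  have h1dt : (1 : ℝ≥0∞) - d ≠ ∞ := ne_top_of_le_ne_top ENNReal.one_ne_top tsub_le_self
  have h1 : ((1:ℝ≥0∞) - d) ^ 2 * ((1 - d)⁻¹) ^ 2 = 1 := by
    rw [← mul_pow, ENNReal.mul_inv_cancel h1d0 h1dt, one_pow]
  have h2 : y / M * M = y := ENNReal.div_mul_cancel hM0 hMt
  calc b ^ i * y ≤ (d ^ 2) ^ i * y := mul_le_mul_left (pow_le_pow_left' hbd i) _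
    _ = (1 - d) ^ 2 * ((d ^ 2) ^ i * (y / M)) * (((1 - d)⁻¹) ^ 2 * M) := by
        rw [show (1 - d) ^ 2 * ((d ^ 2) ^ i * (y / M)) * (((1 - d)⁻¹) ^ 2 * M)
            = ((1 - d) ^ 2 * ((1 - d)⁻¹) ^ 2) * ((d ^ 2) ^ i * (y / M * M)) from by ring,
          h1, h2, one_mul]

lemma sigmaG_sum (v : ℕ → ℝ≥0∞) (i : ℕ) :
    ∑' j, ((some (j + i) : Option ℕ)).elim 0 v ≤ ∑' m, v m := by
  simpa [Option.elim] using
    tsum_comp_le_tsum_of_injective (f := fun j : ℕ => j + i) (add_left_injective i) v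

lemma sigmaH_sum (v : ℕ → ℝ≥0∞) (i : ℕ) :
    ∑' j, ((if i ≤ j then some (j - i) else none : Option ℕ)).elim 0 v ≤ ∑' m, v m := by
  have heq : ∀ j : ℕ, ((if i ≤ j then some (j - i) else none : Option ℕ)).elim 0 v
      = (fun j => if i ≤ j then v (j - i) else 0) j := by
    intro j
    by_cases h : i ≤ j <;> simp [h]
  rw [tsum_congr heq]
  refine le_of_eq ?_
  have hinj : Function.Injective (fun k : ℕ => k + i) := add_left_injective i
  have hsupp : Function.support (fun j => if i ≤ j then v (j - i) else 0)
      ⊆ Set.range (fun k : ℕ => k + i) := by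
    intro j hj
    by_cases h : i ≤ j
    · exact ⟨j - i, Nat.sub_add_cancel h⟩
    · simp [h] at hj
  have h := hinj.tsum_eq (f := fun j => if i ≤ j then v (j - i) else 0) hsupp
  rw [← h]
  refine tsum_congr fun k => ?_
  simp [Nat.le_add_left]

lemma hG_G (g : ℕ → En n → ℝ≥0∞) {d : ℝ≥0∞} (hd1 : d < 1) {b : ℝ≥0∞} (hbd : b ≤ d ^ 2)
    (M : ℝ≥0∞) (hM0 : M ≠ 0) (hMt : M ≠ ∞) (j : ℕ) (x : En n) :
    (∑' i, b ^ i * g (j + i) x) / (((1 - d)⁻¹) ^ 2 * M)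
      ≤ (1 - d) ^ 2 * ∑' i, (d ^ 2) ^ i
          * ((some (j + i) : Option ℕ)).elim 0 (fun m => g m x / M) := by
  refine ENNReal.div_le_of_le_mul ?_
  rw [← ENNReal.tsum_mul_left, ← ENNReal.tsum_mul_right]
  refine Summable.tsum_le_tsum (fun i => ?_) ENNReal.summable ENNReal.summable
  simpa [Option.elim] using term_core hd1 hM0 hMt hbd i (g (j + i) x)

lemma hG_H (g : ℕ → En n → ℝ≥0∞) {d : ℝ≥0∞} (hd1 : d < 1) {b : ℝ≥0∞} (hbd : b ≤ d ^ 2)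
    (M : ℝ≥0∞) (hM0 : M ≠ 0) (hMt : M ≠ ∞) (j : ℕ) (x : En n) :
    (∑ m ∈ Finset.range (j + 1), b ^ (j - m) * g m x) / (((1 - d)⁻¹) ^ 2 * M)
      ≤ (1 - d) ^ 2 * ∑' i, (d ^ 2) ^ i
          * ((if i ≤ j then some (j - i) else none : Option ℕ)).elim 0
              (fun m => g m x / M) := by
  have hre : ∑ m ∈ Finset.range (j + 1), b ^ (j - m) * g m x
      = ∑ i ∈ Finset.range (j + 1), b ^ i * g (j - i) x := by
    calc ∑ m ∈ Finset.range (j + 1), b ^ (j - m) * g m x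
        = ∑ i ∈ Finset.range (j + 1), b ^ (j - (j + 1 - 1 - i)) * g (j + 1 - 1 - i) x :=
          (Finset.sum_range_reflect (fun m => b ^ (j - m) * g m x) (j + 1)).symm
      _ = ∑ i ∈ Finset.range (j + 1), b ^ i * g (j - i) x := by
          refine Finset.sum_congr rfl fun i hi => ?_
          have hij : i ≤ j := Nat.lt_succ_iff.mp (Finset.mem_range.mp hi)
          have e1 : j + 1 - 1 - i = j - i := by omega
          have e2 : j - (j - i) = i := Nat.sub_sub_self hij
          rw [e1, e2]
  rw [hre]
  refine ENNReal.div_le_of_le_mul ?_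
  rw [← ENNReal.tsum_mul_left, ← ENNReal.tsum_mul_right]
  have hstep : ∑ i ∈ Finset.range (j + 1), b ^ i * g (j - i) x
      = ∑ i ∈ Finset.range (j + 1),
          (fun i => if i ≤ j then b ^ i * g (j - i) x else 0) i := by
    refine Finset.sum_congr rfl fun i hi => ?_
    have hij : i ≤ j := Nat.lt_succ_iff.mp (Finset.mem_range.mp hi)
    simp [hij]
  rw [hstep]
  refine le_trans (ENNReal.sum_le_tsum _) ?_
  refine Summable.tsum_le_tsum (fun i => ?_) ENNReal.summable ENNReal.summable
  by_cases hij : i ≤ j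
  · simp only [hij, if_pos, if_true, Option.elim]
    simpa [hij, Option.elim] using term_core hd1 hM0 hMt hbd i (g (j - i) x)
  · simp [hij]

end Stmt11Aux

/-- Hardy-type inequality in `ℓ^{q(·)}(L^{p(·)})`. -/
theorem stmt11 {n : ℕ} (p q : En n → ℝ≥0∞) (hp : IsExponent p) (hq : IsExponent q)
    (a : ℝ) (ha0 : 0 < a) (ha1 : a < 1) :
    ∃ c : ℝ≥0∞, c ≠ ∞ ∧ ∀ g : ℕ → En n → ℝ≥0∞,
      (∀ m, Measurable (g m)) → mixedNorm q p g ≠ ∞ →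
      mixedNorm q p (fun j x => ∑' i : ℕ, ENNReal.ofReal a ^ i * g (j + i) x)
        + mixedNorm q p (fun j x => ∑ m ∈ Finset.range (j + 1),
            ENNReal.ofReal a ^ (j - m) * g m x)
        ≤ c * mixedNorm q p g := by
  have ha2 : a ≤ (1 + a) / 2 := by linarith
  have hdrpos : 0 < Real.sqrt ((1 + a) / 2) := Real.sqrt_pos.mpr (by linarith)
  have hdrlt : Real.sqrt ((1 + a) / 2) < 1 := by
    have h1 : (1 + a) / 2 < 1 := by linarith
    calc Real.sqrt ((1 + a) / 2) < Real.sqrt 1 := Real.sqrt_lt_sqrt (by linarith) h1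
      _ = 1 := Real.sqrt_one
  set d : ℝ≥0∞ := ENNReal.ofReal (Real.sqrt ((1 + a) / 2)) with hd
  have hd0 : d ≠ 0 := (ENNReal.ofReal_pos.mpr hdrpos).ne'
  have hd1 : d < 1 := by
    rw [hd, ← ENNReal.ofReal_one]
    exact (ENNReal.ofReal_lt_ofReal_iff zero_lt_one).mpr hdrlt
  have hbd : ENNReal.ofReal a ≤ d ^ 2 := by
    rw [hd, sq, ← ENNReal.ofReal_mul hdrpos.le,
      Real.mul_self_sqrt (by linarith : (0:ℝ) ≤ (1 + a) / 2)]
    exact ENNReal.ofReal_le_ofReal ha2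
  have h1d0 : (1 : ℝ≥0∞) - d ≠ 0 := by
    simpa [tsub_eq_zero_iff_le] using hd1.not_ge
  have hct : ((1 - d)⁻¹ : ℝ≥0∞) ^ 2 ≠ ∞ := ENNReal.pow_ne_top (ENNReal.inv_ne_top.mpr h1d0)
  refine ⟨2 * ((1 - d)⁻¹) ^ 2, ENNReal.mul_ne_top (by norm_num) hct, ?_⟩
  intro g hg _
  have hGb := norm_bound p q hp hq hd0 hd1 g hg (fun j i => some (j + i))
    (fun j x => ∑' i : ℕ, ENNReal.ofReal a ^ i * g (j + i) x)
    (fun v i => sigmaG_sum v i)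
    (fun M hM0 hMt j x => hG_G g hd1 hbd M hM0 hMt j x)
  have hHb := norm_bound p q hp hq hd0 hd1 g hg
    (fun j i => if i ≤ j then some (j - i) else none)
    (fun j x => ∑ m ∈ Finset.range (j + 1), ENNReal.ofReal a ^ (j - m) * g m x)
    (fun v i => sigmaH_sum v i)
    (fun M hM0 hMt j x => hG_H g hd1 hbd M hM0 hMt j x)
  refine le_trans (add_le_add hGb hHb) (le_of_eq ?_)
  ring
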